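/- Let σ̄ = ⟨σ₁,…,σₙ⟩ be a consistent permutation sequence such that each σᵢ has finite order, and suppose σ̄ is a layered symmetry of the modal CNF formula φ (σ̄(φ) = φ). Let C be a class of pointed Kripke models such that C ∩ C_Tree is closed under σ̄ (for every tree model M ∈ C, σ̄(M) ∈ C). Then Mod_{C ∩ C_Tree}(φ) = σ̄(Mod_{C ∩ C_Tree}(φ)). -/

import Mathlib

namespace ModalSym

inductive Lit (Atom : Type) : Type
  | pos (a : Atom) : Lit Atom
  | neg (a : Atom) : Lit Atom
  deriving DecidableEq

namespace Lit
def flip {Atom : Type} : Lit Atom → Lit Atom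
  | pos a => neg a
  | neg a => pos a
def atom {Atom : Type} : Lit Atom → Atom
  | pos a => a
  | neg a => a
end Lit

/-- A permutation `σ` of literals is consistent when it commutes with negation. -/
def Consistent {Atom : Type} (σ : Lit Atom → Lit Atom) : Prop :=
  ∀ l, σ l.flip = (σ l).flip

/-- Modal CNF clauses of modal depth at most `n`: a clause is a finite set whose
elements are literals or modal literals `□ₘ C` / `¬□ₘ C` (`Bool` gives the polarity,
`true` for `□ₘ C`). -/
@[reducible] def ClauseT (Atom Mod : Type) : ℕ → Type
  | 0 => Finset (Lit Atom)
  | n+1 => Finset (Lit Atom ⊕ Bool × Mod × ClauseT Atom Mod n)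

instance instDecEqClauseT {Atom Mod : Type} [DecidableEq Atom] [DecidableEq Mod] :
    ∀ n, DecidableEq (ClauseT Atom Mod n)
  | 0 => inferInstanceAs (DecidableEq (Finset (Lit Atom)))
  | n+1 =>
    letI := instDecEqClauseT (Atom := Atom) (Mod := Mod) n
    inferInstanceAs (DecidableEq (Finset (Lit Atom ⊕ Bool × Mod × ClauseT Atom Mod n)))

/-- A modal CNF formula (of modal depth at most `n`): a finite set of clauses. -/
@[reducible] def FormT (Atom Mod : Type) (n : ℕ) : Type := Finset (ClauseT Atom Mod n)

/-- A pointed Kripke model. -/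
structure KModel (Atom Mod : Type) : Type 1 where
  W : Type
  pt : W
  V : W → Set Atom
  R : Mod → W → W → Prop

def satLit {Atom : Type} (S : Set Atom) : Lit Atom → Prop
  | .pos a => a ∈ S
  | .neg a => a ∉ S

def satClause {Atom Mod : Type} (M : KModel Atom Mod) :
    ∀ n, ClauseT Atom Mod n → M.W → Prop
  | 0, C, v => ∃ l ∈ C, satLit (M.V v) l
  | n+1, C, v => ∃ e ∈ C,
      match e with
      | Sum.inl l => satLit (M.V v) l
      | Sum.inr (b, m, C') =>
          cond b (∀ u, M.R m v u → satClause M n C' u)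
                 (¬ ∀ u, M.R m v u → satClause M n C' u)

/-- `M ⊨ φ`. -/
def satForm {Atom Mod : Type} (M : KModel Atom Mod) {n : ℕ} (φ : FormT Atom Mod n) : Prop :=
  ∀ C ∈ φ, satClause M n C M.pt

/-- `L_S`, the complete consistent set of literals generated by `S ⊆ Atom`. -/
def genLits {Atom : Type} (S : Set Atom) : Set (Lit Atom) := {l | satLit S l}

def permClause {Atom Mod : Type} [DecidableEq Atom] [DecidableEq Mod]
    (σ : Lit Atom → Lit Atom) : ∀ n, ClauseT Atom Mod n → ClauseT Atom Mod n
  | 0, C => C.image σ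
  | n+1, C => C.image fun e =>
      match e with
      | Sum.inl l => Sum.inl (σ l)
      | Sum.inr (b, m, C') => Sum.inr (b, m, permClause σ n C')

/-- The action `σ(φ)` of a permutation of literals on a modal CNF formula. -/
def permForm {Atom Mod : Type} [DecidableEq Atom] [DecidableEq Mod]
    (σ : Lit Atom → Lit Atom) {n : ℕ} (φ : FormT Atom Mod n) : FormT Atom Mod n :=
  φ.image (permClause σ n)

/-- The permuted model `σ(M)`, with `V'(v) = σ(L_{V(v)}) ∩ Atom`. -/
def permModel {Atom Mod : Type} (σ : Lit Atom → Lit Atom) (M : KModel Atom Mod) :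
    KModel Atom Mod where
  W := M.W
  pt := M.pt
  V := fun v => {a | Lit.pos a ∈ σ '' genLits (M.V v)}
  R := M.R

def IsBisim {Atom Mod : Type} (M M' : KModel Atom Mod) (Z : M.W → M'.W → Prop) : Prop :=
  Z M.pt M'.pt ∧
  (∀ v v', Z v v' → ∀ a, a ∈ M.V v ↔ a ∈ M'.V v') ∧
  (∀ v v' m u, Z v v' → M.R m v u → ∃ u', M'.R m v' u' ∧ Z u u') ∧
  (∀ v v' m u', Z v v' → M'.R m v' u' → ∃ u, M.R m v u ∧ Z u u')

def Bisimilar {Atom Mod : Type} (M M' : KModel Atom Mod) : Prop := ∃ Z, IsBisim M M' Z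

def IsSigmaSim {Atom Mod : Type} (σ : Lit Atom → Lit Atom) (M M' : KModel Atom Mod)
    (Z : M.W → M'.W → Prop) : Prop :=
  Z M.pt M'.pt ∧
  (∀ v v', Z v v' → ∀ l, l ∈ genLits (M.V v) ↔ σ l ∈ genLits (M'.V v')) ∧
  (∀ v v' m u, Z v v' → M.R m v u → ∃ u', M'.R m v' u' ∧ Z u u') ∧
  (∀ v v' m u', Z v v' → M'.R m v' u' → ∃ u, M.R m v u ∧ Z u u')

/-- `M ,→σ M'`. -/
def SigmaSim {Atom Mod : Type} (σ : Lit Atom → Lit Atom) (M M' : KModel Atom Mod) : Prop :=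
  ∃ Z, IsSigmaSim σ M M' Z

/-- `IsPathFrom M v p`: `p` is a valid path (list of (modality, state) steps) starting at `v`. -/
def IsPathFrom {Atom Mod : Type} (M : KModel Atom Mod) : M.W → List (Mod × M.W) → Prop
  | _, [] => True
  | v, s :: rest => M.R s.1 v s.2 ∧ IsPathFrom M s.2 rest

def pathLast {Atom Mod : Type} (M : KModel Atom Mod) : M.W → List (Mod × M.W) → M.W
  | v, [] => v
  | _, s :: rest => pathLast M s.2 rest

/-- A tree model: every state is the last state of exactly one rooted path. -/
def IsTree {Atom Mod : Type} (M : KModel Atom Mod) : Prop :=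
  ∀ v : M.W, ∃! p : List (Mod × M.W), IsPathFrom M M.pt p ∧ pathLast M M.pt p = v

/-- The depth of a state: the (minimal) length of a rooted path leading to it. -/
noncomputable def depth {Atom Mod : Type} (M : KModel Atom Mod) (v : M.W) : ℕ :=
  sInf {d | ∃ p, IsPathFrom M M.pt p ∧ pathLast M M.pt p = v ∧ p.length = d}

/-- The unravelling `T(M)`. -/
def unravel {Atom Mod : Type} (M : KModel Atom Mod) : KModel Atom Mod where
  W := {p : List (Mod × M.W) // IsPathFrom M M.pt p}
  pt := ⟨[], trivial⟩
  V := fun p => M.V (pathLast M M.pt p.1)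
  R := fun m p p' => ∃ v, p'.1 = p.1 ++ [(m, v)]

/-- `head(σ̄)`: the first permutation of the sequence, identity for the empty sequence. -/
def headP {Atom : Type} (σs : List (Lit Atom → Lit Atom)) : Lit Atom → Lit Atom :=
  σs.headD id

def lpermClause {Atom Mod : Type} [DecidableEq Atom] [DecidableEq Mod]
    (σs : List (Lit Atom → Lit Atom)) : ∀ n, ClauseT Atom Mod n → ClauseT Atom Mod n
  | 0, C => C.image (headP σs)
  | n+1, C => C.image fun e =>
      match e with
      | Sum.inl l => Sum.inl (headP σs l)
      | Sum.inr (b, m, C') => Sum.inr (b, m, lpermClause σs.tail n C')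

/-- The action `σ̄(φ)` of a permutation sequence on a modal CNF formula. -/
def lpermForm {Atom Mod : Type} [DecidableEq Atom] [DecidableEq Mod]
    (σs : List (Lit Atom → Lit Atom)) {n : ℕ} (φ : FormT Atom Mod n) : FormT Atom Mod n :=
  φ.image (lpermClause σs n)

/-- The layered permuted model `σ̄(M)` (meaningful on tree models):
at a state of depth `d` the permutation `head(σ̄_{d+1})` is used. -/
noncomputable def lpermModel {Atom Mod : Type} (σs : List (Lit Atom → Lit Atom))
    (M : KModel Atom Mod) : KModel Atom Mod where
  W := M.W
  pt := M.pt
  V := fun v => {a | Lit.pos a ∈ headP (σs.drop (depth M v)) '' genLits (M.V v)}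
  R := M.R

def IsLSim {Atom Mod : Type} (σs : List (Lit Atom → Lit Atom)) (M M' : KModel Atom Mod)
    (Z : ℕ → M.W → M'.W → Prop) : Prop :=
  Z 0 M.pt M'.pt ∧
  (∀ i v v', Z i v v' →
    ∀ l, l ∈ genLits (M.V v) ↔ headP (σs.drop i) l ∈ genLits (M'.V v')) ∧
  (∀ i v v' m u, Z i v v' → M.R m v u → ∃ u', M'.R m v' u' ∧ Z (i+1) u u') ∧
  (∀ i v v' m u', Z i v v' → M'.R m v' u' → ∃ u, M.R m v u ∧ Z (i+1) u u')

/-- `M ,→σ̄ M'`. -/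
def LSim {Atom Mod : Type} (σs : List (Lit Atom → Lit Atom)) (M M' : KModel Atom Mod) : Prop :=
  ∃ Z, IsLSim σs M M' Z

/-- `Mod_C(φ)`: the models in the class `𝒞` satisfying `φ`. -/
def ModC {Atom Mod : Type} (𝒞 : Set (KModel Atom Mod)) {n : ℕ} (φ : FormT Atom Mod n) :
    Set (KModel Atom Mod) := {M ∈ 𝒞 | satForm M φ}

/-- `φ ⊨_C ψ`. -/
def Entails {Atom Mod : Type} (𝒞 : Set (KModel Atom Mod)) {n₁ n₂ : ℕ}
    (φ : FormT Atom Mod n₁) (ψ : FormT Atom Mod n₂) : Prop :=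
  ModC 𝒞 φ ⊆ ModC 𝒞 ψ



section Aux

variable {Atom Mod : Type}

/-! ### Basic literal lemmas -/

lemma satLit_flip (S : Set Atom) (l : Lit Atom) : satLit S l.flip ↔ ¬ satLit S l := by
  cases l <;> simp [Lit.flip, satLit]

lemma satLit_perm {τ : Lit Atom → Lit Atom} (hb : Function.Bijective τ) (hc : Consistent τ)
    (S : Set Atom) (l : Lit Atom) :
    satLit {a | Lit.pos a ∈ τ '' genLits S} (τ l) ↔ satLit S l := by
  have hmem : ∀ l' : Lit Atom, τ l' ∈ τ '' genLits S ↔ satLit S l' := fun l' =>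
    Function.Injective.mem_set_image hb.1
  have hflip : τ l.flip = (τ l).flip := hc l
  cases h : τ l with
  | pos b =>
    show Lit.pos b ∈ τ '' genLits S ↔ _
    rw [← h, hmem]
  | neg b =>
    have hpb : Lit.pos b = τ l.flip := by rw [hflip, h]; rfl
    show Lit.pos b ∉ τ '' genLits S ↔ _
    rw [hpb, hmem, satLit_flip, not_not]

lemma genLits_perm {τ : Lit Atom → Lit Atom} (hb : Function.Bijective τ) (hc : Consistent τ)
    (S : Set Atom) :
    genLits {a | Lit.pos a ∈ τ '' genLits S} = τ '' genLits S := by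
  ext l
  obtain ⟨l0, rfl⟩ := hb.2 l
  constructor
  · intro hl
    exact ⟨l0, (satLit_perm hb hc S l0).1 hl, rfl⟩
  · rintro ⟨l1, h1, heq⟩
    cases hb.1 heq
    exact (satLit_perm hb hc S l0).2 h1

lemma headP_bij_cons (σs : List (Lit Atom → Lit Atom))
    (hbij : ∀ σ ∈ σs, Function.Bijective σ) (hcons : ∀ σ ∈ σs, Consistent σ) (d : ℕ) :
    Function.Bijective (headP (σs.drop d)) ∧ Consistent (headP (σs.drop d)) := by
  cases h : σs.drop d with
  | nil => exact ⟨Function.bijective_id, fun _ => rfl⟩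
  | cons σ t =>
    have hm : σ ∈ σs := List.mem_of_mem_drop (h ▸ (List.mem_cons_self (a := σ) (l := t)))
    exact ⟨hbij σ hm, hcons σ hm⟩

/-! ### Path and depth lemmas -/

lemma pathLast_append (M : KModel Atom Mod) (m : Mod) (u : M.W) :
    ∀ (p : List (Mod × M.W)) (w : M.W), pathLast M w (p ++ [(m, u)]) = u
  | [], _ => rfl
  | s :: rest, _ => pathLast_append M m u rest s.2

lemma isPathFrom_append (M : KModel Atom Mod) (m : Mod) (u : M.W) :
    ∀ (p : List (Mod × M.W)) (w : M.W), IsPathFrom M w p → M.R m (pathLast M w p) u →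
      IsPathFrom M w (p ++ [(m, u)])
  | [], _, _, h => ⟨h, trivial⟩
  | s :: rest, _, hp, h => ⟨hp.1, isPathFrom_append M m u rest s.2 hp.2 h⟩

lemma depth_eq {M : KModel Atom Mod} (htree : IsTree M) {v : M.W} {p : List (Mod × M.W)}
    (hp : IsPathFrom M M.pt p) (hl : pathLast M M.pt p = v) : depth M v = p.length := by
  obtain ⟨q, _, huniq⟩ := htree v
  have hset : {d | ∃ r, IsPathFrom M M.pt r ∧ pathLast M M.pt r = v ∧ r.length = d}
      = {p.length} := by
    ext d
    constructor
    · rintro ⟨r, hr, hrl, rfl⟩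
      have h1 : r = q := huniq r ⟨hr, hrl⟩
      have h2 : p = q := huniq p ⟨hp, hl⟩
      simp [h1, h2]
    · rintro rfl
      exact ⟨p, hp, hl, rfl⟩
  rw [depth, hset, csInf_singleton]

lemma depth_root (M : KModel Atom Mod) : depth M M.pt = 0 :=
  Nat.sInf_eq_zero.2 (Or.inl ⟨[], trivial, rfl, rfl⟩)

lemma depth_succ {M : KModel Atom Mod} (htree : IsTree M) {m : Mod} {v u : M.W}
    (h : M.R m v u) : depth M u = depth M v + 1 := by
  obtain ⟨p, ⟨hp, hl⟩, _⟩ := htree v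
  have h1 : depth M v = p.length := depth_eq htree hp hl
  have h2 : depth M u = (p ++ [(m, u)]).length :=
    depth_eq htree (isPathFrom_append M m u p M.pt hp (by rw [hl]; exact h))
      (pathLast_append M m u p M.pt)
  simp [h1, h2]

/-! ### `lpermModel` preserves the frame -/

lemma isPathFrom_lperm (σs : List (Lit Atom → Lit Atom)) (M : KModel Atom Mod) :
    ∀ (p : List (Mod × M.W)) (v : M.W),
      IsPathFrom (lpermModel σs M) v p ↔ IsPathFrom M v p
  | [], _ => Iff.rfl
  | s :: rest, _ => and_congr Iff.rfl (isPathFrom_lperm σs M rest s.2)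

lemma pathLast_lperm (σs : List (Lit Atom → Lit Atom)) (M : KModel Atom Mod) :
    ∀ (p : List (Mod × M.W)) (v : M.W), pathLast (lpermModel σs M) v p = pathLast M v p
  | [], _ => rfl
  | s :: rest, _ => pathLast_lperm σs M rest s.2

lemma isTree_lperm (σs : List (Lit Atom → Lit Atom)) (M : KModel Atom Mod) :
    IsTree (lpermModel σs M) ↔ IsTree M := by
  unfold IsTree
  refine forall_congr' fun v => existsUnique_congr fun p =>
    and_congr (isPathFrom_lperm σs M p M.pt) ?_
  rw [show pathLast (lpermModel σs M) (lpermModel σs M).pt p = pathLast M M.pt p from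
    pathLast_lperm σs M p M.pt]
  exact Iff.rfl

lemma depth_lperm (σs : List (Lit Atom → Lit Atom)) (M : KModel Atom Mod) (v : M.W) :
    depth (lpermModel σs M) v = depth M v := by
  have h : {d | ∃ p, IsPathFrom (lpermModel σs M) (lpermModel σs M).pt p ∧
        pathLast (lpermModel σs M) (lpermModel σs M).pt p = v ∧ p.length = d}
      = {d | ∃ p, IsPathFrom M M.pt p ∧ pathLast M M.pt p = v ∧ p.length = d} := by
    ext d
    exact exists_congr fun p => and_congr (isPathFrom_lperm σs M p M.pt)
      (by rw [show pathLast (lpermModel σs M) (lpermModel σs M).pt p = pathLast M M.pt p from pathLast_lperm σs M p M.pt]; exact Iff.rfl)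
  exact congrArg sInf h

/-! ### The key satisfaction lemma -/

lemma satClause_lperm [DecidableEq Atom] [DecidableEq Mod]
    (σs : List (Lit Atom → Lit Atom))
    (hbij : ∀ σ ∈ σs, Function.Bijective σ) (hcons : ∀ σ ∈ σs, Consistent σ)
    (M : KModel Atom Mod) (htree : IsTree M) :
    ∀ (n : ℕ) (C : ClauseT Atom Mod n) (v : M.W),
      satClause (lpermModel σs M) n (lpermClause (σs.drop (depth M v)) n C) v ↔
        satClause M n C v := by
  intro n
  induction n with
  | zero =>
    intro C v
    obtain ⟨hb, hc⟩ := headP_bij_cons σs hbij hcons (depth M v)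
    constructor
    · rintro ⟨l', hl', hsat⟩
      simp only [lpermClause] at hl'
      rw [Finset.mem_image] at hl'
      obtain ⟨l, hl, rfl⟩ := hl'
      exact ⟨l, hl, (satLit_perm hb hc (M.V v) l).1 hsat⟩
    · rintro ⟨l, hl, hsat⟩
      refine ⟨_, ?_, (satLit_perm hb hc (M.V v) l).2 hsat⟩
      simp only [lpermClause]
      exact Finset.mem_image_of_mem _ hl
  | succ n ih =>
    intro C v
    obtain ⟨hb, hc⟩ := headP_bij_cons σs hbij hcons (depth M v)
    have key : ∀ (m : Mod) (C' : ClauseT Atom Mod n),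
        (∀ u, M.R m v u →
          satClause (lpermModel σs M) n
            (lpermClause ((σs.drop (depth M v)).tail) n C') u) ↔
        (∀ u, M.R m v u → satClause M n C' u) := by
      intro m C'
      refine forall_congr' fun u => imp_congr_right fun hr => ?_
      have hd : depth M u = depth M v + 1 := depth_succ htree hr
      rw [List.tail_drop, ← hd]
      exact ih C' u
    constructor
    · rintro ⟨e', he', hsat⟩
      simp only [lpermClause] at he'
      rw [Finset.mem_image] at he'
      obtain ⟨e, he, rfl⟩ := he'
      refine ⟨e, he, ?_⟩
      match e with
      | Sum.inl l => exact (satLit_perm hb hc (M.V v) l).1 hsat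
      | Sum.inr (true, m, C') => exact (key m C').1 hsat
      | Sum.inr (false, m, C') => exact fun hall => hsat ((key m C').2 hall)
    · rintro ⟨e, he, hsat⟩
      match e, he, hsat with
      | Sum.inl l, he, hsat =>
        refine ⟨Sum.inl (headP (σs.drop (depth M v)) l), ?_,
          (satLit_perm hb hc (M.V v) l).2 hsat⟩
        simp only [lpermClause]
        exact Finset.mem_image_of_mem _ he
      | Sum.inr (true, m, C'), he, hsat =>
        refine ⟨Sum.inr (true, m, lpermClause (σs.drop (depth M v)).tail n C'), ?_,
          (key m C').2 hsat⟩
        simp only [lpermClause]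
        exact Finset.mem_image_of_mem _ he
      | Sum.inr (false, m, C'), he, hsat =>
        refine ⟨Sum.inr (false, m, lpermClause (σs.drop (depth M v)).tail n C'), ?_,
          fun hall => hsat ((key m C').1 hall)⟩
        simp only [lpermClause]
        exact Finset.mem_image_of_mem _ he

lemma satForm_lperm [DecidableEq Atom] [DecidableEq Mod]
    (σs : List (Lit Atom → Lit Atom))
    (hbij : ∀ σ ∈ σs, Function.Bijective σ) (hcons : ∀ σ ∈ σs, Consistent σ)
    (M : KModel Atom Mod) (htree : IsTree M) {n : ℕ} (φ : FormT Atom Mod n) :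
    satForm (lpermModel σs M) (lpermForm σs φ) ↔ satForm M φ := by
  have key : ∀ C : ClauseT Atom Mod n,
      satClause (lpermModel σs M) n (lpermClause σs n C) M.pt ↔ satClause M n C M.pt := by
    intro C
    have h := satClause_lperm σs hbij hcons M htree n C M.pt
    rwa [depth_root, List.drop_zero] at h
  constructor
  · intro h C hC
    exact (key C).1 (h _ (Finset.mem_image_of_mem _ hC))
  · intro h C' hC'
    obtain ⟨C, hC, rfl⟩ := Finset.mem_image.1 hC'
    exact (key C).2 (h C hC)

/-! ### Iteration machinery -/

lemma consistent_iterate {σ : Lit Atom → Lit Atom} (hc : Consistent σ) (j : ℕ) :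
    Consistent σ^[j] := by
  induction j with
  | zero => exact fun _ => rfl
  | succ j ih =>
    intro l
    rw [Function.iterate_succ_apply', Function.iterate_succ_apply', ih l, hc]

lemma bij_iterate {α : Type*} {f : α → α} (h : Function.Bijective f) :
    ∀ j : ℕ, Function.Bijective f^[j]
  | 0 => Function.bijective_id
  | j + 1 => by rw [Function.iterate_succ']; exact h.comp (bij_iterate h j)

def compSeq {α : Type*} : List (α → α) → List (α → α) → List (α → α)
  | [], τs => τs
  | σ :: σt, [] => σ :: σt
  | σ :: σt, τ :: τt => (σ ∘ τ) :: compSeq σt τt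

lemma headP_compSeq (σs : List (Lit Atom → Lit Atom)) :
    ∀ (τs : List (Lit Atom → Lit Atom)) (d : ℕ),
      headP ((compSeq σs τs).drop d) = headP (σs.drop d) ∘ headP (τs.drop d) := by
  induction σs with
  | nil =>
    intro τs d
    simp only [compSeq, List.drop_nil]
    rfl
  | cons σ σt ih =>
    intro τs d
    cases τs with
    | nil =>
      simp only [compSeq, List.drop_nil]
      rfl
    | cons τ τt =>
      cases d with
      | zero => rfl
      | succ d => exact ih τt d

lemma compSeq_map_self {α : Type*} (f : (α → α) → (α → α)) :
    ∀ σs : List (α → α), compSeq σs (σs.map f) = σs.map fun σ => σ ∘ f σ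
  | [] => rfl
  | σ :: t => by
      simp only [List.map_cons, compSeq, compSeq_map_self f t]

lemma lperm_comp (σs τs : List (Lit Atom → Lit Atom))
    (hbτ : ∀ σ ∈ τs, Function.Bijective σ) (hcτ : ∀ σ ∈ τs, Consistent σ)
    (M : KModel Atom Mod) :
    lpermModel σs (lpermModel τs M) = lpermModel (compSeq σs τs) M := by
  have hV : ∀ v : M.W,
      (lpermModel σs (lpermModel τs M)).V v = (lpermModel (compSeq σs τs) M).V v := by
    intro v
    obtain ⟨hb, hc⟩ := headP_bij_cons τs hbτ hcτ (depth M v)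
    show {a | Lit.pos a ∈ headP (σs.drop (depth (lpermModel τs M) v)) ''
        genLits ((lpermModel τs M).V v)}
      = {a | Lit.pos a ∈ headP ((compSeq σs τs).drop (depth M v)) '' genLits (M.V v)}
    rw [depth_lperm]
    have hg : genLits ((lpermModel τs M).V v)
        = headP (τs.drop (depth M v)) '' genLits (M.V v) := genLits_perm hb hc (M.V v)
    rw [hg, ← Set.image_comp, ← headP_compSeq]
  exact congrArg (fun V => KModel.mk M.W M.pt V M.R) (funext hV)

lemma lperm_id (σs : List (Lit Atom → Lit Atom)) (hid : ∀ σ ∈ σs, σ = id)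
    (M : KModel Atom Mod) : lpermModel σs M = M := by
  have hV : ∀ v : M.W, (lpermModel σs M).V v = M.V v := by
    intro v
    have hh : headP (σs.drop (depth M v)) = id := by
      cases h : σs.drop (depth M v) with
      | nil => rfl
      | cons σ t => exact hid σ (List.mem_of_mem_drop (h ▸ (List.mem_cons_self (a := σ) (l := t))))
    show {a | Lit.pos a ∈ headP (σs.drop (depth M v)) '' genLits (M.V v)} = M.V v
    rw [hh, Set.image_id]
    rfl
  exact congrArg (fun V => KModel.mk M.W M.pt V M.R) (funext hV)

lemma lperm_iterate (σs : List (Lit Atom → Lit Atom))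
    (hbij : ∀ σ ∈ σs, Function.Bijective σ) (hcons : ∀ σ ∈ σs, Consistent σ)
    (M : KModel Atom Mod) :
    ∀ j : ℕ, (lpermModel σs)^[j] M = lpermModel (σs.map fun σ => σ^[j]) M := by
  intro j
  induction j with
  | zero =>
    simp only [Function.iterate_zero, id_eq]
    refine (lperm_id _ ?_ M).symm
    intro τ hτ
    obtain ⟨σ, _, rfl⟩ := List.mem_map.1 hτ
    rfl
  | succ j ih =>
    rw [Function.iterate_succ_apply', ih]
    have hbm : ∀ σ ∈ σs.map fun σ => σ^[j], Function.Bijective σ := by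
      intro τ hτ
      obtain ⟨σ, hσ, rfl⟩ := List.mem_map.1 hτ
      exact bij_iterate (hbij σ hσ) j
    have hcm : ∀ σ ∈ σs.map fun σ => σ^[j], Consistent σ := by
      intro τ hτ
      obtain ⟨σ, hσ, rfl⟩ := List.mem_map.1 hτ
      exact consistent_iterate (hcons σ hσ) j
    rw [lperm_comp σs _ hbm hcm M, compSeq_map_self]
    have h : (fun σ : Lit Atom → Lit Atom => σ ∘ σ^[j]) = fun σ => σ^[j + 1] := by
      funext σ
      exact (Function.iterate_succ' σ j).symm
    rw [h]

lemma exists_common_order (σs : List (Lit Atom → Lit Atom))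
    (hord : ∀ σ ∈ σs, ∃ k : ℕ, 1 ≤ k ∧ σ^[k] = id) :
    ∃ K : ℕ, 1 ≤ K ∧ ∀ σ ∈ σs, σ^[K] = id := by
  induction σs with
  | nil => exact ⟨1, le_refl 1, by simp⟩
  | cons σ t ih =>
    obtain ⟨k, hk1, hk⟩ := hord σ ((List.mem_cons_self (a := σ) (l := t)))
    obtain ⟨K, hK1, hK⟩ := ih fun τ hτ => hord τ (List.mem_cons_of_mem σ hτ)
    refine ⟨k * K, Nat.one_le_iff_ne_zero.2 (Nat.mul_ne_zero
      (Nat.one_le_iff_ne_zero.1 hk1) (Nat.one_le_iff_ne_zero.1 hK1)), ?_⟩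
    intro τ hτ
    rcases List.mem_cons.1 hτ with rfl | hτ
    · rw [Function.iterate_mul, hk, Function.iterate_id]
    · rw [mul_comm, Function.iterate_mul, hK τ hτ, Function.iterate_id]

end Aux

/-- for a finite-order consistent layered symmetry `σ̄` of `φ` and a class
`𝒞` with `𝒞 ∩ C_Tree` closed under `σ̄`,
`Mod_{𝒞 ∩ C_Tree}(φ) = σ̄(Mod_{𝒞 ∩ C_Tree}(φ))`. -/
theorem modC_tree_eq_lperm_modC {Atom Mod : Type} [Countable Atom] [Countable Mod]
    [DecidableEq Atom] [DecidableEq Mod]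
    (σs : List (Lit Atom → Lit Atom))
    (hbij : ∀ σ ∈ σs, Function.Bijective σ) (hcons : ∀ σ ∈ σs, Consistent σ)
    (hord : ∀ σ ∈ σs, ∃ k : ℕ, 1 ≤ k ∧ σ^[k] = id)
    {n : ℕ} (φ : FormT Atom Mod n) (hsym : lpermForm σs φ = φ)
    (𝒞 : Set (KModel Atom Mod))
    (hclosed : ∀ M ∈ 𝒞, IsTree M → lpermModel σs M ∈ 𝒞) :
    ModC (𝒞 ∩ {M | IsTree M}) φ = lpermModel σs '' ModC (𝒞 ∩ {M | IsTree M}) φ := by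
  obtain ⟨K, hK1, hK⟩ := exists_common_order σs hord
  have hstep : ∀ M ∈ ModC (𝒞 ∩ {M | IsTree M}) φ,
      lpermModel σs M ∈ ModC (𝒞 ∩ {M | IsTree M}) φ := by
    rintro M ⟨⟨hC, hT⟩, hsat⟩
    refine ⟨⟨hclosed M hC hT, (isTree_lperm σs M).2 hT⟩, ?_⟩
    have h := satForm_lperm σs hbij hcons M hT φ
    rw [hsym] at h
    exact h.2 hsat
  apply Set.Subset.antisymm
  · intro M hM
    have hiter : ∀ j : ℕ, (lpermModel σs)^[j] M ∈ ModC (𝒞 ∩ {M | IsTree M}) φ := by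
      intro j
      induction j with
      | zero => exact hM
      | succ j ih =>
        rw [Function.iterate_succ_apply']
        exact hstep _ ih
    refine ⟨(lpermModel σs)^[K - 1] M, hiter (K - 1), ?_⟩
    have hKs : K - 1 + 1 = K := Nat.succ_pred_eq_of_pos hK1
    calc lpermModel σs ((lpermModel σs)^[K - 1] M)
        = (lpermModel σs)^[K - 1 + 1] M := (Function.iterate_succ_apply' _ _ _).symm
      _ = (lpermModel σs)^[K] M := by rw [hKs]
      _ = lpermModel (σs.map fun σ => σ^[K]) M := lperm_iterate σs hbij hcons M K
      _ = M := by
          refine lperm_id _ ?_ M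
          intro τ hτ
          obtain ⟨σ, hσ, rfl⟩ := List.mem_map.1 hτ
          exact hK σ hσ
  · rintro M' ⟨M, hM, rfl⟩
    exact hstep M hM

end ModalSym
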